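/- Fix an integer N ≥ 2 and positive reals σ_1, …, σ_N. Define c_{k,l}(σ) := tr(ρA) − 2(ρAρ)_{kl}/ρ_{kl} for 1 ≤ k ≤ l ≤ N−1, where A is the (N−1)×(N−1) symmetric tridiagonal matrix with A_{ii} = σ_i² + σ_{i+1}², A_{i,i+1} = A_{i+1,i} = −σ_{i+1}², A_{ij} = 0 for |i−j| ≥ 2, and ρ is the (N−1)×(N−1) matrix with ρ_{ij} = 2·min(i,j)·(N − max(i,j))/N. For α ∈ ℝ^M and l = 1,…,M−1 let c_l(α) := −(2(M−1)/M)α_1² + (2(M+1)/M)·Σ_{p=2}^{l} α_p² + ((2(M−1)(M−l) − 4l)/((M−l)M))·Σ_{p=l+1}^{M} α_p², let α^← be the reversed vector, and let CP(α) := min(c_1(α), c_1(α^←), c_2(α), c_2(α^←), …, c_{M−2}(α), c_{M−2}(α^←), c_{M−1}(α)). Then min_{1 ≤ k ≤ l ≤ N−1} c_{k,l}(σ) ≥ 0 if and only if CP(σ) ≥ 0, where CP(σ) is computed with M = N and α = (σ_1,…,σ_N). -/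

import Mathlib

open Finset in
lemma aux_sum_range_extend (n : ℕ) (hn : 1 ≤ n) (f : ℕ → ℝ) (hf : f (n-1) = 0) :
    ∑ m ∈ range (n-1), f m = ∑ m ∈ range n, f m := by
  have h : n = (n-1)+1 := by omega
  conv_rhs => rw [h, Finset.sum_range_succ]
  rw [hf, add_zero]

open Finset in
lemma aux_sum_range_shift (n : ℕ) (hn : 1 ≤ n) (f : ℕ → ℝ) (hf : f 0 = 0) :
    ∑ m ∈ range (n-1), f (m+1) = ∑ m ∈ range n, f m := by
  have h : n = (n-1)+1 := by omega
  conv_rhs => rw [h, Finset.sum_range_succ']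
  rw [hf, add_zero]

set_option maxHeartbeats 2000000 in
/-- The minimum of `c_{k,l}(σ)` over `1 ≤ k ≤ l ≤ N−1` is nonnegative if and only if
`CP(σ) := min(c_1(σ), c_1(σ^←), …, c_{N−2}(σ), c_{N−2}(σ^←), c_{N−1}(σ)) ≥ 0`. -/
theorem min_ckl_nonneg_iff_CP_nonneg (N : ℕ) (hN : 2 ≤ N) (σ : Fin N → ℝ)
    (hσ : ∀ i, 0 < σ i) :
    let A : Matrix (Fin (N - 1)) (Fin (N - 1)) ℝ := fun i j =>
      if i = j then
        σ ⟨i.1, by have := i.isLt; omega⟩ ^ 2 + σ ⟨i.1 + 1, by have := i.isLt; omega⟩ ^ 2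
      else if i.1 + 1 = j.1 ∨ j.1 + 1 = i.1 then
        -σ ⟨max i.1 j.1, by have := i.isLt; have := j.isLt; omega⟩ ^ 2
      else 0
    let ρ : Matrix (Fin (N - 1)) (Fin (N - 1)) ℝ := fun i j =>
      2 * (min (i.1 + 1) (j.1 + 1) : ℕ) * ((N : ℝ) - (max (i.1 + 1) (j.1 + 1) : ℕ)) / N
    -- `c α l` is the quantity `c_l(α)` of the paper, with `M = N` (indices 1-based)
    let c : (Fin N → ℝ) → Fin (N - 1) → ℝ := fun α l =>
      -(2 * ((N : ℝ) - 1) / N) * α ⟨0, by omega⟩ ^ 2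
        + 2 * ((N : ℝ) + 1) / N *
          (∑ p ∈ Finset.univ.filter fun p : Fin N => 1 ≤ p.1 ∧ p.1 ≤ l.1, α p ^ 2)
        + (2 * ((N : ℝ) - 1) * ((N : ℝ) - ((l.1 : ℝ) + 1)) - 4 * ((l.1 : ℝ) + 1)) /
          (((N : ℝ) - ((l.1 : ℝ) + 1)) * N) *
          (∑ p ∈ Finset.univ.filter fun p : Fin N => l.1 < p.1, α p ^ 2)
    -- the reversed vector `σ^← = (σ_N, …, σ_1)`
    let σrev : Fin N → ℝ := fun p => σ p.rev
    -- `CP(σ)`: minimum of `c_l(σ)` and `c_l(σ^←)` for `l = 1, …, N−2`, and `c_{N−1}(σ)`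
    let CP : ℝ := Finset.univ.inf' ⟨⟨0, by omega⟩, Finset.mem_univ _⟩
      fun l : Fin (N - 1) =>
        if l.1 + 2 < N then min (c σ l) (c σrev l) else c σ l
    (0 ≤ (Finset.univ.filter fun p : Fin (N - 1) × Fin (N - 1) => p.1 ≤ p.2).inf'
        ⟨(⟨0, by omega⟩, ⟨0, by omega⟩), by simp⟩
        fun p =>
          Matrix.trace (ρ * A) - 2 * (ρ * A * ρ) p.1 p.2 / ρ p.1 p.2)
      ↔ 0 ≤ CP := by
  intro A ρ c σrev CP
  have hN0 : (N : ℝ) ≠ 0 := by positivity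
  have hNpos : (0:ℝ) < N := by positivity
  -- squared entries, extended by zero
  set E : ℕ → ℝ := fun p => if h : p < N then σ ⟨p, h⟩ ^ 2 else 0 with hEdef
  have hEnn : ∀ p, 0 ≤ E p := by
    intro p
    simp only [hEdef]
    split
    · positivity
    · exact le_refl 0
  have hEvalσ : ∀ (p : ℕ) (h : p < N), σ ⟨p, h⟩ ^ 2 = E p := by
    intro p h
    simp only [hEdef, dif_pos h]
  -- the extended inverse-reflection kernel (1-based indices)
  set r : ℕ → ℕ → ℝ :=
    fun a b => 2 * (min a b : ℕ) * ((N : ℝ) - (max a b : ℕ)) / N with hrdef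
  have hρval : ∀ i j : Fin (N - 1), ρ i j = r (i.1 + 1) (j.1 + 1) := fun i j => rfl
  have hrsymm : ∀ a b, r a b = r b a := by
    intro a b
    simp only [hrdef, min_comm, max_comm]
  have hr0 : ∀ a, r a 0 = 0 := by
    intro a
    simp only [hrdef, Nat.min_zero, Nat.cast_zero, mul_zero, zero_mul, zero_div]
  have hrN : ∀ a, a ≤ N → r a N = 0 := by
    intro a ha
    simp only [hrdef, Nat.max_eq_right ha, sub_self, mul_zero, zero_div]
  have hrdiff : ∀ a p : ℕ, 1 ≤ a → a < N → p < N →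
      r a (p + 1) - r a p = (if p < a then 2 else 0) - 2 * a / N := by
    intro a p ha haN hp
    simp only [hrdef]
    rcases lt_or_ge p a with h | h
    · rw [if_pos h, show a ⊓ (p+1) = p+1 by omega, show a ⊔ (p+1) = a by omega,
        show a ⊓ p = p by omega, show a ⊔ p = a by omega]
      push_cast
      field_simp
      ring
    · rw [if_neg (by omega), show a ⊓ (p+1) = a by omega, show a ⊔ (p+1) = p+1 by omega,
        show a ⊓ p = a by omega, show a ⊔ p = p by omega]
      push_cast
      field_simp
      ring
  -- the weight function
  set wt : ℕ → ℕ → ℕ → ℝ := fun t s p =>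
    2 * ((N : ℝ) + 1) / N - (if p < t then 4 / (t : ℝ) else 0)
      - (if s ≤ p then 4 / ((N : ℝ) - s) else 0) with hwtdef
  set S : ℕ → ℕ → ℝ := fun t s => ∑ p ∈ Finset.range N, E p * wt t s p with hSdef
  -- matrix entry computations
  have hAdef : ∀ i j : Fin (N - 1), A i j =
      (if i = j then
        σ ⟨i.1, by have := i.isLt; omega⟩ ^ 2 + σ ⟨i.1 + 1, by have := i.isLt; omega⟩ ^ 2
      else if i.1 + 1 = j.1 ∨ j.1 + 1 = i.1 then
        -σ ⟨max i.1 j.1, by have := i.isLt; have := j.isLt; omega⟩ ^ 2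
      else 0) := fun i j => rfl
  have hAval : ∀ i j : Fin (N - 1), A i j =
      E j.1 * ((if i = j then (1:ℝ) else 0) - (if i.1 + 1 = j.1 then 1 else 0))
      + E (j.1 + 1) * ((if i = j then (1:ℝ) else 0) - (if i.1 = j.1 + 1 then 1 else 0)) := by
    intro i j
    rw [hAdef]
    rcases eq_or_ne i j with h1 | h1
    · subst h1
      rw [if_pos rfl, if_neg (show ¬(i.1+1 = i.1) by omega),
        if_neg (show ¬(i.1 = i.1+1) by omega), if_pos rfl]
      rw [hEvalσ, hEvalσ]
      ring
    · have h1' : i.1 ≠ j.1 := fun hh => h1 (Fin.ext hh)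
      simp only [if_neg h1]
      by_cases h2 : i.1 + 1 = j.1
      · rw [if_pos (Or.inl h2), if_pos h2, if_neg (show ¬(i.1 = j.1+1) by omega)]
        rw [hEvalσ (i.1 ⊔ j.1), show i.1 ⊔ j.1 = j.1 by omega]
        ring
      · by_cases h3 : j.1 + 1 = i.1
        · rw [if_pos (Or.inr h3), if_neg h2, if_pos (show i.1 = j.1+1 by omega)]
          rw [hEvalσ (i.1 ⊔ j.1), show i.1 ⊔ j.1 = j.1+1 by omega]
          ring
        · rw [if_neg (by simp [h2, h3] : ¬(i.1+1 = j.1 ∨ j.1+1 = i.1)), if_neg h2,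
            if_neg (show ¬(i.1 = j.1+1) by omega)]
          ring
  have hμ : ∀ k j : Fin (N - 1), (ρ * A) k j =
      E j.1 * (r (k.1+1) (j.1+1) - r (k.1+1) j.1)
      + E (j.1+1) * (r (k.1+1) (j.1+1) - r (k.1+1) (j.1+2)) := by
    intro k j
    rw [Matrix.mul_apply]
    have hterm : ∀ i : Fin (N - 1), ρ k i * A i j =
        (if i = j then r (k.1+1) (j.1+1) * (E j.1 + E (j.1+1)) else 0)
        - (if i.1 + 1 = j.1 then r (k.1+1) (i.1+1) * E j.1 else 0)
        - (if i.1 = j.1 + 1 then r (k.1+1) (i.1+1) * E (j.1+1) else 0) := by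
      intro i
      rw [hAval, hρval]
      by_cases h1 : i = j
      · subst h1
        rw [if_pos rfl, if_pos rfl, if_neg (show ¬(i.1+1 = i.1) by omega),
          if_neg (show ¬(i.1 = i.1+1) by omega), if_neg (show ¬(i.1+1 = i.1) by omega),
          if_neg (show ¬(i.1 = i.1+1) by omega)]
        ring
      · rw [if_neg h1, if_neg h1]
        split_ifs <;> ring
    rw [Finset.sum_congr rfl (fun i _ => hterm i), Finset.sum_sub_distrib,
      Finset.sum_sub_distrib]
    have hS1 : (∑ i : Fin (N-1), if i = j then r (k.1+1) (j.1+1) * (E j.1 + E (j.1+1)) else 0)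
        = r (k.1+1) (j.1+1) * (E j.1 + E (j.1+1)) := by
      rw [Finset.sum_ite_eq' Finset.univ j (fun _ => r (k.1+1) (j.1+1) * (E j.1 + E (j.1+1))),
        if_pos (Finset.mem_univ j)]
    have hS2 : (∑ i : Fin (N-1), if i.1 + 1 = j.1 then r (k.1+1) (i.1+1) * E j.1 else 0)
        = r (k.1+1) j.1 * E j.1 := by
      by_cases hj : j.1 = 0
      · have hz : (∑ i : Fin (N-1), if i.1 + 1 = j.1 then r (k.1+1) (i.1+1) * E j.1 else 0)
            = 0 := Finset.sum_eq_zero (fun i _ => if_neg (by omega))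
        rw [hz, hj, hr0, zero_mul]
      · have hone : (∑ i : Fin (N-1), if i.1 + 1 = j.1 then r (k.1+1) (i.1+1) * E j.1 else 0)
            = if (j.1-1) + 1 = j.1 then r (k.1+1) ((j.1-1)+1) * E j.1 else 0 :=
          Finset.sum_eq_single ⟨j.1 - 1, by have := j.isLt; omega⟩
            (fun b _ hb => if_neg (fun hh => hb (Fin.ext (by
              have : b.1 = j.1 - 1 := by omega
              simpa using this))))
            (fun h => absurd (Finset.mem_univ _) h)
        rw [hone, if_pos (by omega), show j.1 - 1 + 1 = j.1 by omega]
    have hS3 : (∑ i : Fin (N-1), if i.1 = j.1 + 1 then r (k.1+1) (i.1+1) * E (j.1+1) else 0)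
        = r (k.1+1) (j.1+2) * E (j.1+1) := by
      by_cases hj : j.1 + 1 < N - 1
      · have hone : (∑ i : Fin (N-1), if i.1 = j.1 + 1 then r (k.1+1) (i.1+1) * E (j.1+1) else 0)
            = if j.1+1 = j.1 + 1 then r (k.1+1) ((j.1+1)+1) * E (j.1+1) else 0 :=
          Finset.sum_eq_single ⟨j.1 + 1, hj⟩
            (fun b _ hb => if_neg (fun hh => hb (Fin.ext (by simpa using hh))))
            (fun h => absurd (Finset.mem_univ _) h)
        rw [hone, if_pos rfl, show j.1 + 1 + 1 = j.1 + 2 by omega]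
      · have hz : (∑ i : Fin (N-1), if i.1 = j.1 + 1 then r (k.1+1) (i.1+1) * E (j.1+1) else 0)
            = 0 := Finset.sum_eq_zero (fun i _ => if_neg (by have := i.isLt; omega))
        rw [hz, show j.1 + 2 = N by have := j.isLt; omega,
          hrN (k.1+1) (by have := k.isLt; omega), zero_mul]
    rw [hS1, hS2, hS3]
    ring
  have key1 : ∀ k l : Fin (N - 1), (ρ * A * ρ) k l =
      ∑ p ∈ Finset.range N, E p *
        ((r (k.1+1) (p+1) - r (k.1+1) p) * (r (l.1+1) (p+1) - r (l.1+1) p)) := by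
    intro k l
    rw [Matrix.mul_apply]
    have e0 : ∑ j : Fin (N-1), (ρ * A) k j * ρ j l
        = ∑ j : Fin (N-1),
          (E j.1 * (r (k.1+1) (j.1+1) - r (k.1+1) j.1) * r (l.1+1) (j.1+1)
           + E (j.1+1) * (r (k.1+1) (j.1+1) - r (k.1+1) (j.1+2)) * r (l.1+1) (j.1+1)) :=
      Finset.sum_congr rfl (fun j _ => by
        rw [hμ, hρval, hrsymm (j.1+1) (l.1+1)]
        ring)
    rw [e0]
    have e1 : ∑ j : Fin (N-1),
          (E j.1 * (r (k.1+1) (j.1+1) - r (k.1+1) j.1) * r (l.1+1) (j.1+1)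
           + E (j.1+1) * (r (k.1+1) (j.1+1) - r (k.1+1) (j.1+2)) * r (l.1+1) (j.1+1))
        = ∑ m ∈ Finset.range (N-1),
          (E m * (r (k.1+1) (m+1) - r (k.1+1) m) * r (l.1+1) (m+1)
           + E (m+1) * (r (k.1+1) (m+1) - r (k.1+1) (m+2)) * r (l.1+1) (m+1)) :=
      Fin.sum_univ_eq_sum_range (fun m =>
          E m * (r (k.1+1) (m+1) - r (k.1+1) m) * r (l.1+1) (m+1)
           + E (m+1) * (r (k.1+1) (m+1) - r (k.1+1) (m+2)) * r (l.1+1) (m+1)) (N-1)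
    rw [e1, Finset.sum_add_distrib]
    have e2 : ∑ m ∈ Finset.range (N-1), E m * (r (k.1+1) (m+1) - r (k.1+1) m) * r (l.1+1) (m+1)
        = ∑ m ∈ Finset.range N, E m * (r (k.1+1) (m+1) - r (k.1+1) m) * r (l.1+1) (m+1) := by
      apply aux_sum_range_extend N (by omega)
      rw [show N-1+1 = N by omega, hrN (l.1+1) (by have := l.isLt; omega), mul_zero]
    have e3 : ∑ m ∈ Finset.range (N-1),
          E (m+1) * (r (k.1+1) (m+1) - r (k.1+1) (m+2)) * r (l.1+1) (m+1)
        = ∑ m ∈ Finset.range N, E m * (r (k.1+1) m - r (k.1+1) (m+1)) * r (l.1+1) m := by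
      have e3' : ∑ m ∈ Finset.range (N-1),
            (fun q => E q * (r (k.1+1) q - r (k.1+1) (q+1)) * r (l.1+1) q) (m+1)
          = ∑ m ∈ Finset.range N, E m * (r (k.1+1) m - r (k.1+1) (m+1)) * r (l.1+1) m :=
        aux_sum_range_shift N (by omega)
          (fun q => E q * (r (k.1+1) q - r (k.1+1) (q+1)) * r (l.1+1) q) (by
          show E 0 * (r (k.1+1) 0 - r (k.1+1) (0+1)) * r (l.1+1) 0 = 0
          rw [hr0, hr0]
          ring)
      rw [← e3']
    rw [e2, e3, ← Finset.sum_add_distrib]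
    exact Finset.sum_congr rfl (fun m _ => by ring)
  have key2 : Matrix.trace (ρ * A) = ∑ p ∈ Finset.range N, E p * (2 - 2 / N) := by
    have htr : Matrix.trace (ρ * A) = ∑ j : Fin (N-1), (ρ * A) j j := by
      simp [Matrix.trace, Matrix.diag]
    rw [htr]
    have e0 : ∑ j : Fin (N-1), (ρ * A) j j
        = ∑ j : Fin (N-1),
          (E j.1 * (2 - 2*((j.1+1:ℕ):ℝ)/N) + E (j.1+1) * (2*((j.1+1:ℕ):ℝ)/N)) := by
      apply Finset.sum_congr rfl
      intro j _
      rw [hμ j j]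
      have hd1 := hrdiff (j.1+1) j.1 (by omega) (by have := j.isLt; omega)
        (by have := j.isLt; omega)
      have hd2 := hrdiff (j.1+1) (j.1+1) (by omega) (by have := j.isLt; omega)
        (by have := j.isLt; omega)
      rw [if_pos (show j.1 < j.1+1 by omega)] at hd1
      rw [if_neg (show ¬(j.1+1 < j.1+1) by omega)] at hd2
      rw [show j.1+1+1 = j.1+2 by omega] at hd2
      linear_combination (E j.1) * hd1 - (E (j.1+1)) * hd2
    rw [e0]
    have e1 : ∑ j : Fin (N-1),
          (E j.1 * (2 - 2*((j.1+1:ℕ):ℝ)/N) + E (j.1+1) * (2*((j.1+1:ℕ):ℝ)/N))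
        = ∑ m ∈ Finset.range (N-1),
          (E m * (2 - 2*((m+1:ℕ):ℝ)/N) + E (m+1) * (2*((m+1:ℕ):ℝ)/N)) :=
      Fin.sum_univ_eq_sum_range
        (fun m => E m * (2 - 2*((m+1:ℕ):ℝ)/N) + E (m+1) * (2*((m+1:ℕ):ℝ)/N)) (N-1)
    rw [e1, Finset.sum_add_distrib]
    have e2 : ∑ m ∈ Finset.range (N-1), E m * (2 - 2*((m+1:ℕ):ℝ)/N)
        = ∑ m ∈ Finset.range N, E m * (2 - 2*((m+1:ℕ):ℝ)/N) := by
      apply aux_sum_range_extend N (by omega)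
      rw [show N-1+1 = N by omega]
      have hz : (2:ℝ) - 2*(N:ℝ)/N = 0 := by field_simp; ring
      rw [hz, mul_zero]
    have e3 : ∑ m ∈ Finset.range (N-1), E (m+1) * (2*((m+1:ℕ):ℝ)/N)
        = ∑ m ∈ Finset.range N, E m * (2*((m:ℕ):ℝ)/N) := by
      have e3' : ∑ m ∈ Finset.range (N-1), (fun q => E q * (2*((q:ℕ):ℝ)/N)) (m+1)
          = ∑ m ∈ Finset.range N, E m * (2*((m:ℕ):ℝ)/N) :=
        aux_sum_range_shift N (by omega) (fun q => E q * (2*((q:ℕ):ℝ)/N)) (by norm_num)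
      rw [← e3']
    rw [e2, e3, ← Finset.sum_add_distrib]
    apply Finset.sum_congr rfl
    intro m _
    push_cast
    ring
  have keyW : ∀ k l : Fin (N - 1), k ≤ l →
      Matrix.trace (ρ * A) - 2 * (ρ * A * ρ) k l / ρ k l = S (k.1+1) (l.1+1) := by
    intro k l hkl
    have hklv : k.1 ≤ l.1 := hkl
    have hsltN : l.1 + 1 < N := by have := l.isLt; omega
    have ht0 : ((k.1:ℝ)+1) ≠ 0 := by positivity
    have hsR : ((l.1:ℝ)+1) < (N:ℝ) := by exact_mod_cast hsltN
    have hs0 : (N:ℝ) - ((l.1:ℝ)+1) ≠ 0 := sub_ne_zero.mpr (by linarith)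
    have hρkl : ρ k l = 2*((k.1+1:ℕ):ℝ) * ((N:ℝ) - ((l.1+1:ℕ):ℝ))/N := by
      simp only [hρval, hrdef]
      rw [show (k.1+1) ⊓ (l.1+1) = k.1+1 by omega, show (k.1+1) ⊔ (l.1+1) = l.1+1 by omega]
    rw [key2, key1 k l, hρkl]
    simp only [hSdef, hwtdef]
    rw [Finset.mul_sum, Finset.sum_div, ← Finset.sum_sub_distrib]
    apply Finset.sum_congr rfl
    intro p hp
    have hpN := Finset.mem_range.mp hp
    rw [hrdiff (k.1+1) p (by omega) (by have := k.isLt; omega) hpN,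
      hrdiff (l.1+1) p (by omega) (by omega) hpN]
    rcases lt_or_ge p (k.1+1) with h1 | h1
    · rw [if_pos h1, if_pos (show p < l.1+1 by omega), if_pos h1,
        if_neg (show ¬(l.1+1 ≤ p) by omega)]
      push_cast
      field_simp
      ring
    · rcases lt_or_ge p (l.1+1) with h2 | h2
      · rw [if_neg (show ¬(p < k.1+1) by omega), if_pos h2,
          if_neg (show ¬(p < k.1+1) by omega), if_neg (show ¬(l.1+1 ≤ p) by omega)]
        push_cast
        field_simp
        ring
      · rw [if_neg (show ¬(p < k.1+1) by omega), if_neg (show ¬(p < l.1+1) by omega),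
          if_neg (show ¬(p < k.1+1) by omega), if_pos h2]
        push_cast
        field_simp
        ring
  have hc : ∀ (α : Fin N → ℝ) (l : Fin (N - 1)), c α l =
      ∑ m ∈ Finset.range N, (if h : m < N then α ⟨m, h⟩ ^ 2 else 0) * wt 1 (l.1+1) m := by
    intro α l
    have hcd : c α l =
        -(2 * ((N : ℝ) - 1) / N) * α ⟨0, by omega⟩ ^ 2
        + 2 * ((N : ℝ) + 1) / N *
          (∑ p ∈ Finset.univ.filter fun p : Fin N => 1 ≤ p.1 ∧ p.1 ≤ l.1, α p ^ 2)
        + (2 * ((N : ℝ) - 1) * ((N : ℝ) - ((l.1 : ℝ) + 1)) - 4 * ((l.1 : ℝ) + 1)) /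
          (((N : ℝ) - ((l.1 : ℝ) + 1)) * N) *
          (∑ p ∈ Finset.univ.filter fun p : Fin N => l.1 < p.1, α p ^ 2) := rfl
    rw [hcd]
    have hs1 : ∀ h0 : (0:ℕ) < N, α ⟨0, h0⟩ ^ 2
        = ∑ m ∈ Finset.range N, (if m = 0 then (if h : m < N then α ⟨m, h⟩ ^ 2 else 0) else 0) := by
      intro h0
      rw [Finset.sum_ite_eq' (Finset.range N) 0 (fun m => if h : m < N then α ⟨m, h⟩ ^ 2 else 0),
        if_pos (Finset.mem_range.mpr h0), dif_pos h0]
    have hs2 : (∑ p ∈ Finset.univ.filter fun p : Fin N => 1 ≤ p.1 ∧ p.1 ≤ l.1, α p ^ 2)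
        = ∑ m ∈ Finset.range N,
          (if 1 ≤ m ∧ m ≤ l.1 then (if h : m < N then α ⟨m, h⟩ ^ 2 else 0) else 0) := by
      rw [Finset.sum_filter]
      refine (Finset.sum_congr rfl (fun p _ => ?_)).trans
        (Fin.sum_univ_eq_sum_range
          (fun m => if 1 ≤ m ∧ m ≤ l.1 then (if h : m < N then α ⟨m, h⟩ ^ 2 else 0) else 0) N)
      show _ = if 1 ≤ p.1 ∧ p.1 ≤ l.1 then (if h : p.1 < N then α ⟨p.1, h⟩ ^ 2 else 0) else 0
      by_cases h : 1 ≤ p.1 ∧ p.1 ≤ l.1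
      · rw [if_pos h, if_pos h, dif_pos p.isLt]
      · rw [if_neg h, if_neg h]
    have hs3 : (∑ p ∈ Finset.univ.filter fun p : Fin N => l.1 < p.1, α p ^ 2)
        = ∑ m ∈ Finset.range N,
          (if l.1 < m then (if h : m < N then α ⟨m, h⟩ ^ 2 else 0) else 0) := by
      rw [Finset.sum_filter]
      refine (Finset.sum_congr rfl (fun p _ => ?_)).trans
        (Fin.sum_univ_eq_sum_range
          (fun m => if l.1 < m then (if h : m < N then α ⟨m, h⟩ ^ 2 else 0) else 0) N)
      show _ = if l.1 < p.1 then (if h : p.1 < N then α ⟨p.1, h⟩ ^ 2 else 0) else 0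
      by_cases h : l.1 < p.1
      · rw [if_pos h, if_pos h, dif_pos p.isLt]
      · rw [if_neg h, if_neg h]
    rw [hs1, hs2, hs3, Finset.mul_sum, Finset.mul_sum, Finset.mul_sum,
      ← Finset.sum_add_distrib, ← Finset.sum_add_distrib]
    apply Finset.sum_congr rfl
    intro m hm
    have hmN := Finset.mem_range.mp hm
    have hlN : l.1 + 1 < N := by have := l.isLt; omega
    have hden : (N:ℝ) - ((l.1:ℝ)+1) ≠ 0 := by
      have : ((l.1:ℝ)+1) < N := by exact_mod_cast hlN
      exact sub_ne_zero.mpr (by linarith)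
    simp only [hwtdef]
    rw [dif_pos hmN]
    by_cases h0 : m = 0
    · rw [if_pos h0, if_neg (by omega), if_neg (by omega),
        if_pos (show m < 1 by omega), if_neg (show ¬(l.1+1 ≤ m) by omega)]
      push_cast
      field_simp
      ring
    · by_cases h1 : 1 ≤ m ∧ m ≤ l.1
      · rw [if_neg h0, if_pos h1, if_neg (by omega),
          if_neg (show ¬(m < 1) by omega), if_neg (show ¬(l.1+1 ≤ m) by omega)]
        push_cast
        ring
      · rw [if_neg h0, if_neg h1, if_pos (show l.1 < m by omega),
          if_neg (show ¬(m < 1) by omega), if_pos (show l.1+1 ≤ m by omega)]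
        push_cast
        field_simp
        ring
  have hcσ : ∀ l : Fin (N - 1), c σ l = S 1 (l.1+1) := by
    intro l
    rw [hc σ l, hSdef]
  have hcrev : ∀ l : Fin (N - 1), l.1 + 2 < N → c σrev l = S (N-1-l.1) (N-1) := by
    intro l hl
    have e1 : ∀ m, m < N →
        (if h : m < N then σrev ⟨m, h⟩ ^ 2 else 0) = E (N-1-m) := by
      intro m hm
      rw [dif_pos hm]
      have hrev : (⟨m, hm⟩ : Fin N).rev = ⟨N-1-m, by omega⟩ := by
        apply Fin.ext
        show N - (m + 1) = N - 1 - m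
        omega
      show σ (⟨m, hm⟩ : Fin N).rev ^ 2 = E (N-1-m)
      rw [hrev, hEvalσ]
    have step3 : ∀ m, m < N →
        E (N-1-(N-1-m)) * wt 1 (l.1+1) (N-1-m) = E m * wt (N-1-l.1) (N-1) m := by
      intro m hm
      rw [show N-1-(N-1-m) = m by omega]
      have h1N : ((N-1:ℕ):ℝ) = (N:ℝ) - 1 := by
        rw [Nat.cast_sub (by omega)]
        norm_num
      congr 1
      simp only [hwtdef]
      by_cases hm1 : m = N-1
      · rw [if_pos (by omega), if_neg (by omega), if_neg (by omega), if_pos (by omega),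
          h1N]
        norm_num
      · by_cases hm2 : m < N-1-l.1
        · rw [if_neg (by omega), if_pos (by omega), if_pos hm2, if_neg (by omega)]
          have hcast : ((N-1-l.1:ℕ):ℝ) = (N:ℝ) - ((l.1+1:ℕ):ℝ) := by
            rw [show N-1-l.1 = N - (l.1+1) by omega, Nat.cast_sub (by omega)]
          rw [hcast]
          norm_num
        · rw [if_neg (by omega), if_neg (by omega), if_neg (by omega), if_neg (by omega)]
    calc c σrev l
        = ∑ m ∈ Finset.range N, (if h : m < N then σrev ⟨m, h⟩ ^ 2 else 0) * wt 1 (l.1+1) m :=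
          hc σrev l
      _ = ∑ m ∈ Finset.range N, E (N-1-m) * wt 1 (l.1+1) m :=
          Finset.sum_congr rfl (fun m hm => by rw [e1 m (Finset.mem_range.mp hm)])
      _ = ∑ m ∈ Finset.range N, E (N-1-(N-1-m)) * wt 1 (l.1+1) (N-1-m) :=
          (Finset.sum_range_reflect (fun m => E (N-1-m) * wt 1 (l.1+1) m) N).symm
      _ = ∑ m ∈ Finset.range N, E m * wt (N-1-l.1) (N-1) m :=
          Finset.sum_congr rfl (fun m hm => step3 m (Finset.mem_range.mp hm))
      _ = S (N-1-l.1) (N-1) := rfl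
  have hint : ∀ t s : ℕ, 2 ≤ t → t ≤ s → s + 2 ≤ N → 0 ≤ S t s := by
    intro t s ht hts hsN
    simp only [hSdef]
    apply Finset.sum_nonneg
    intro p hp
    apply mul_nonneg (hEnn p)
    simp only [hwtdef]
    have h2N : (2:ℝ) ≤ (N:ℝ) := by exact_mod_cast hN
    have hb : (2:ℝ) ≤ 2*((N:ℝ)+1)/N := by
      rw [le_div_iff₀ hNpos]
      linarith
    by_cases h1 : p < t
    · rw [if_pos h1, if_neg (by omega)]
      have ht2 : (2:ℝ) ≤ (t:ℝ) := by exact_mod_cast ht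
      have : 4/(t:ℝ) ≤ 2 := by
        rw [div_le_iff₀ (by linarith)]
        linarith
      linarith
    · rw [if_neg h1]
      by_cases h2 : s ≤ p
      · rw [if_pos h2]
        have hs2 : ((s:ℝ)) + 2 ≤ (N:ℝ) := by exact_mod_cast hsN
        have : 4/((N:ℝ) - s) ≤ 2 := by
          rw [div_le_iff₀ (by linarith)]
          linarith
        linarith
      · rw [if_neg h2]
        linarith
  -- assembly
  have hCP : CP = Finset.univ.inf' ⟨⟨0, by omega⟩, Finset.mem_univ _⟩
      (fun l : Fin (N - 1) =>
        if l.1 + 2 < N then min (c σ l) (c σrev l) else c σ l) := rfl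
  rw [hCP]
  refine Iff.trans (Finset.le_inf'_iff ..) (Iff.trans ?_ (Finset.le_inf'_iff ..).symm)
  constructor
  · intro h l _
    have hbase : ∀ k l : Fin (N - 1), k ≤ l → 0 ≤ S (k.1+1) (l.1+1) := by
      intro k l hkl
      have := h (k, l) (by simp [Finset.mem_filter, hkl])
      rwa [keyW k l hkl] at this
    have h1 : 0 ≤ S 1 (l.1+1) := by
      have h0 : 0 ≤ S ((0:ℕ)+1) (l.1+1) :=
        hbase ⟨0, by omega⟩ l (by simp [Fin.le_def])
      simpa using h0
    by_cases hl : l.1 + 2 < N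
    · rw [if_pos hl, le_min_iff]
      refine ⟨by rw [hcσ l]; exact h1, ?_⟩
      rw [hcrev l hl]
      have h2 : 0 ≤ S (N-2-l.1+1) (N-2+1) :=
        hbase ⟨N-2-l.1, by omega⟩ ⟨N-2, by omega⟩ (Fin.mk_le_mk.mpr (by omega))
      rw [show N-2-l.1+1 = N-1-l.1 by omega, show N-2+1 = N-1 by omega] at h2
      exact h2
    · rw [if_neg hl, hcσ l]
      exact h1
  · intro h p hp
    have hkl : p.1 ≤ p.2 := (Finset.mem_filter.mp hp).2
    rw [keyW p.1 p.2 hkl]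
    set k := p.1 with hk
    set l := p.2 with hl
    by_cases hk0 : k.1 = 0
    · have := h l (Finset.mem_univ l)
      have hcl : 0 ≤ c σ l := by
        by_cases hl2 : l.1 + 2 < N
        · rw [if_pos hl2] at this; exact le_min_iff.mp this |>.1
        · rwa [if_neg hl2] at this
      rw [hcσ l] at hcl
      rw [show k.1 + 1 = 1 by omega]
      exact hcl
    · by_cases hl2 : l.1 + 2 < N
      · exact hint (k.1+1) (l.1+1) (by omega) (by have := Fin.le_def.mp hkl; omega)
          (by omega)
      · have hlval : l.1 = N - 2 := by have := l.isLt; omega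
        have hmem := h ⟨N-2-k.1, by omega⟩ (Finset.mem_univ _)
        have hcond : (N:ℕ)-2-k.1 + 2 < N := by
          have := k.isLt; omega
        have hcrv : 0 ≤ c σrev ⟨N-2-k.1, by omega⟩ := by
          rw [if_pos hcond] at hmem
          exact le_min_iff.mp hmem |>.2
        rw [hcrev ⟨N-2-k.1, by omega⟩ hcond] at hcrv
        have hcrv2 : 0 ≤ S (N-1-(N-2-k.1)) (N-1) := hcrv
        rw [show N-1-(N-2-k.1) = k.1+1 by have := k.isLt; omega] at hcrv2
        rw [show l.1+1 = N-1 by omega]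
        exact hcrv2
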